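/- arXiv:2504.19608 — 2 statements merged into one kernel-verified Lean document; each statement's English description precedes it below -/
import Mathlib

section
/- Every ordinary edge g satisfies f(g) ≤ i(i−1)/2 − i − 1: g is contained in none of the i optimal paths whose endpoints are cyclically consecutive on the OHC (these are the paths obtained by deleting one edge of the OHC), and g is also not contained in the optimal path whose two endpoints are the endpoints of g. -/
open Finset

/-- The length of a path, given as a list of vertices, with respect to the
distance function `d`: the sum of `d` over consecutive entries. -/
def pathLen {V : Type*} (d : V → V → ℝ) (P : List V) : ℝ :=
  ((P.zip P.tail).map fun p => d p.1 p.2).sum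

/-- A path (list of vertices) contains the edge `{x, y}` iff `x` and `y`
occur consecutively in it (in either order). -/
def ContainsEdge {V : Type*} (P : List V) (x y : V) : Prop :=
  [x, y] <:+: P ∨ [y, x] <:+: P

/-- A Hamiltonian path of the whole (finite) vertex type `V` from `u` to `v`:
a duplicate-free list of all vertices starting at `u` and ending at `v`. -/
def IsHamPath {V : Type*} (P : List V) (u v : V) : Prop :=
  P.Nodup ∧ (∀ x : V, x ∈ P) ∧ P.head? = some u ∧ P.getLast? = some v

/-- The frequency of the (unordered) edge `e`: the number of unordered pairs
`{u, v}` of distinct vertices whose optimal path `OP u v` contains `e`. -/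
noncomputable def freq {V : Type*} (OP : V → V → List V) (e : Sym2 V) : ℕ :=
  Nat.card {p : Sym2 V // ¬ p.IsDiag ∧
    ∃ u v : V, p = s(u, v) ∧ ∃ x y : V, e = s(x, y) ∧ ContainsEdge (OP u v) x y}

/-- The length of the cycle obtained by closing up the list `C`. -/
def cycLen {V : Type*} (d : V → V → ℝ) (C : List V) : ℝ :=
  pathLen d (C ++ C.take 1)

/-- A Hamiltonian cycle of the finite vertex type `V`, represented as a
duplicate-free list of all vertices (closed up cyclically). -/
def IsHamCycle {V : Type*} (C : List V) : Prop :=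
  C.Nodup ∧ ∀ x : V, x ∈ C

/-- `x` and `y` are cyclically consecutive on the cycle (list) `C`. -/
def CycAdj {V : Type*} (C : List V) (x y : V) : Prop :=
  ContainsEdge (C ++ C.take 1) x y

section Helpers

variable {V : Type*}

lemma pair_infix_iff {x y : V} : ∀ {L : List V},
    [x, y] <:+: L ↔ ∃ n, L[n]? = some x ∧ L[n+1]? = some y := by
  intro L
  induction L with
  | nil => simp
  | cons a t ih =>
    rw [List.infix_cons_iff, ih]
    constructor
    · rintro (h | ⟨n, h1, h2⟩)
      · rw [List.cons_prefix_cons] at h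
        obtain ⟨rfl, t', rfl⟩ := h
        exact ⟨0, rfl, by simp⟩
      · exact ⟨n + 1, by simpa using h1, by simpa using h2⟩
    · rintro ⟨n, h1, h2⟩
      match n with
      | 0 =>
        left
        simp only [List.getElem?_cons_zero, Option.some.injEq] at h1
        subst h1
        rw [List.getElem?_cons_succ] at h2
        rcases t with _ | ⟨b, t⟩
        · simp at h2
        · simp only [List.getElem?_cons_zero, Option.some.injEq] at h2
          subst h2
          exact List.cons_prefix_cons.mpr ⟨rfl, ⟨t, rfl⟩⟩
      | (m+1) =>
        right
        exact ⟨m, by simpa using h1, by simpa using h2⟩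

lemma pathLen_cons (d : V → V → ℝ) (a b : V) (L : List V) :
    pathLen d (a :: b :: L) = d a b + pathLen d (b :: L) := by
  simp [pathLen]

lemma pathLen_append_singleton (d : V → V → ℝ) (c : V) :
    ∀ (L : List V) (h : L ≠ []), pathLen d (L ++ [c]) = pathLen d L + d (L.getLast h) c := by
  intro L
  induction L with
  | nil => simp
  | cons a t ih =>
    intro _
    rcases t with _ | ⟨b, t⟩
    · simp [pathLen]
    · rw [List.cons_append, List.cons_append, pathLen_cons, ← List.cons_append,
        ih (by simp), pathLen_cons]
      rw [show (a :: b :: t).getLast ‹_› = (b :: t).getLast (by simp) from List.getLast_cons _]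
      ring

lemma pathLen_reverse (d : V → V → ℝ) (hd : ∀ u v, d u v = d v u) :
    ∀ (L : List V), pathLen d L.reverse = pathLen d L := by
  intro L
  induction L with
  | nil => rfl
  | cons a t ih =>
    rcases t with _ | ⟨b, t⟩
    · rfl
    · rw [List.reverse_cons, pathLen_append_singleton d a _ (by simp), ih, pathLen_cons,
        List.getLast_reverse, hd a b]
      simp [List.head_cons]
      ring

/-- `b` follows `a` cyclically on `C`. -/
def CNext (C : List V) (a b : V) : Prop :=
  ∃ n, (C ++ C.take 1)[n]? = some a ∧ (C ++ C.take 1)[n+1]? = some b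

lemma closed_eq (C : List V) (hC : C ≠ []) : C ++ C.take 1 = C ++ [C.head hC] := by
  rcases C with _ | ⟨a, t⟩
  · simp at hC
  · simp

lemma cnext_iff_mod {C : List V} (hC : C ≠ []) {a b : V} :
    CNext C a b ↔ ∃ n < C.length, C[n]? = some a ∧ C[(n+1) % C.length]? = some b := by
  have hlen : 0 < C.length := List.length_pos_iff.mpr hC
  rw [CNext, closed_eq C hC]
  constructor
  · rintro ⟨n, h1, h2⟩
    have hn1 : n + 1 < C.length + 1 := by
      by_contra h
      rw [List.getElem?_eq_none (by simp; omega)] at h2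
      cases h2
    have hn : n < C.length := by omega
    refine ⟨n, hn, ?_, ?_⟩
    · rwa [List.getElem?_append_left hn] at h1
    · rcases Nat.lt_or_ge (n+1) C.length with h | h
      · rw [Nat.mod_eq_of_lt h]
        rwa [List.getElem?_append_left h] at h2
      · have he : n + 1 = C.length := by omega
        rw [he, Nat.mod_self]
        rw [he, List.getElem?_append_right (le_refl _), Nat.sub_self] at h2
        simp only [List.getElem?_cons_zero] at h2
        rw [← h2, ← List.head?_eq_getElem?, List.head?_eq_head hC]
  · rintro ⟨n, hn, h1, h2⟩
    refine ⟨n, ?_, ?_⟩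
    · rw [List.getElem?_append_left hn]; exact h1
    · rcases Nat.lt_or_ge (n+1) C.length with h | h
      · rw [List.getElem?_append_left h]
        rwa [Nat.mod_eq_of_lt h] at h2
      · have he : n + 1 = C.length := by omega
        rw [he, List.getElem?_append_right (le_refl _), Nat.sub_self]
        simp only [List.getElem?_cons_zero]
        rw [he, Nat.mod_self, ← List.head?_eq_getElem?, List.head?_eq_head hC] at h2
        exact h2.symm ▸ rfl

lemma mod_helper {L : ℕ} (hL : 0 < L) {n : ℕ} (hn : n < L) (k : ℕ) :
    ((n + (L - k % L)) % L + k) % L = n := by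
  obtain ⟨q, r, hr, rfl⟩ : ∃ q r, r < L ∧ k = L * q + r :=
    ⟨k / L, k % L, Nat.mod_lt _ hL, (Nat.div_add_mod k L).symm⟩
  have hkr : (L * q + r) % L = r := by rw [Nat.mul_add_mod, Nat.mod_eq_of_lt hr]
  rw [hkr, Nat.mod_add_mod]
  set m := L * q with hm
  have e : n + (L - r) + (m + r) = n + m + L := by omega
  rw [e]
  have e2 : n + m + L = n + L * (q + 1) := by rw [hm]; ring
  rw [e2, Nat.add_mul_mod_self_left, Nat.mod_eq_of_lt hn]

lemma cnext_rotate {C : List V} {a b : V} (k : ℕ) (h : CNext C a b) :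
    CNext (C.rotate k) a b := by
  rcases eq_or_ne C ([] : List V) with rfl | hC
  · simpa using h
  have hlen : 0 < C.length := List.length_pos_iff.mpr hC
  have hC' : C.rotate k ≠ [] := by
    intro he; apply hC; simpa using congrArg List.length he
  rw [cnext_iff_mod hC] at h
  obtain ⟨n, hn, h1, h2⟩ := h
  rw [cnext_iff_mod hC']
  refine ⟨(n + (C.length - k % C.length)) % C.length, ?_, ?_, ?_⟩
  · simpa using Nat.mod_lt (n + (C.length - k % C.length)) hlen
  · rw [List.getElem?_rotate (by simpa using Nat.mod_lt (n + (C.length - k % C.length)) hlen),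
      mod_helper hlen hn k]
    exact h1
  · have hlt : ((n + (C.length - k % C.length)) % C.length + 1) % (C.rotate k).length
        < C.length := by simpa using Nat.mod_lt _ hlen
    rw [List.getElem?_rotate hlt]
    simp only [List.length_rotate]
    have key : (((n + (C.length - k % C.length)) % C.length + 1) % C.length + k) % C.length
        = (n + 1) % C.length := by
      rw [Nat.mod_add_mod]
      have e : (n + (C.length - k % C.length)) % C.length + 1 + k
          = ((n + (C.length - k % C.length)) % C.length + k) + 1 := by omega
      rw [e, ← Nat.mod_add_mod, mod_helper hlen hn k]
    rw [key]
    exact h2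

lemma rotate_back (C : List V) (k : ℕ) (hC : C ≠ []) :
    (C.rotate k).rotate (C.length - k % C.length) = C := by
  rw [List.rotate_rotate, ← List.rotate_mod]
  have hlen : 0 < C.length := List.length_pos_iff.mpr hC
  obtain ⟨q, r, hr, hk⟩ : ∃ q r, r < C.length ∧ k = C.length * q + r :=
    ⟨_, _, Nat.mod_lt _ hlen, (Nat.div_add_mod k C.length).symm⟩
  have hmod : k % C.length = r := by rw [hk, Nat.mul_add_mod, Nat.mod_eq_of_lt hr]
  have e : k + (C.length - k % C.length) = C.length * (q + 1) := by
    rw [hmod, hk]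
    have e2 : C.length * (q + 1) = C.length * q + C.length := by ring
    set m := C.length * q
    omega
  rw [e, Nat.mul_mod_right, List.rotate_zero]

lemma cnext_rotate_iff {C : List V} {a b : V} (k : ℕ) :
    CNext (C.rotate k) a b ↔ CNext C a b := by
  constructor
  · intro h
    rcases eq_or_ne C ([] : List V) with rfl | hC
    · simpa using h
    have h2 := cnext_rotate (C.length - k % C.length) h
    rwa [rotate_back C k hC] at h2
  · exact cnext_rotate k

lemma cnext_reverse {C : List V} {a b : V} (h : CNext C.reverse a b) : CNext C b a := by
  rcases eq_or_ne C ([] : List V) with rfl | hC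
  · obtain ⟨n, h1, -⟩ := h
    simp at h1
  have hC' : C.reverse ≠ [] := by simpa using hC
  have hlen : 0 < C.length := List.length_pos_iff.mpr hC
  rw [cnext_iff_mod hC'] at h
  rw [cnext_iff_mod hC]
  simp only [List.length_reverse] at h
  obtain ⟨n, hn, h1, h2⟩ := h
  rw [List.getElem?_reverse hn] at h1
  rcases Nat.lt_or_ge (n+1) C.length with hlt | hge
  · rw [Nat.mod_eq_of_lt hlt, List.getElem?_reverse hlt] at h2
    refine ⟨C.length - 1 - (n+1), by omega, h2, ?_⟩
    have e : (C.length - 1 - (n+1) + 1) % C.length = C.length - 1 - n := by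
      have e2 : C.length - 1 - (n+1) + 1 = C.length - 1 - n := by omega
      rw [e2, Nat.mod_eq_of_lt (by omega)]
    rw [e]
    exact h1
  · have he : n + 1 = C.length := by omega
    rw [he, Nat.mod_self, List.getElem?_reverse hlen] at h2
    refine ⟨C.length - 1, by omega, by simpa using h2, ?_⟩
    have e : (C.length - 1 + 1) % C.length = 0 := by
      rw [Nat.sub_add_cancel hlen, Nat.mod_self]
    rw [e]
    have e2 : C.length - 1 - n = 0 := by omega
    rwa [e2] at h1

lemma cnext_reverse_iff {C : List V} {a b : V} : CNext C.reverse a b ↔ CNext C b a := by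
  constructor
  · exact cnext_reverse
  · intro h
    have h2 : CNext C.reverse.reverse b a := by rwa [List.reverse_reverse]
    exact cnext_reverse h2

lemma cycAdj_iff {C : List V} {x y : V} : CycAdj C x y ↔ CNext C x y ∨ CNext C y x := by
  rw [CycAdj, ContainsEdge, pair_infix_iff, pair_infix_iff]
  rfl

lemma cycAdj_rotate {C : List V} {x y : V} (k : ℕ) :
    CycAdj (C.rotate k) x y ↔ CycAdj C x y := by
  rw [cycAdj_iff, cycAdj_iff, cnext_rotate_iff, cnext_rotate_iff]

lemma cycAdj_reverse {C : List V} {x y : V} : CycAdj C.reverse x y ↔ CycAdj C x y := by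
  rw [cycAdj_iff, cycAdj_iff, cnext_reverse_iff, cnext_reverse_iff]
  exact or_comm

lemma cycAdj_symm {C : List V} {x y : V} (h : CycAdj C x y) : CycAdj C y x := by
  rw [cycAdj_iff] at h ⊢
  exact h.symm

lemma cycAdj_of_containsEdge {P : List V} {x y : V} (h : ContainsEdge P x y) :
    CycAdj P x y := by
  rcases h with h | h
  · exact Or.inl (h.trans ⟨[], P.take 1, by simp⟩)
  · exact Or.inr (h.trans ⟨[], P.take 1, by simp⟩)

lemma containsEdge_reverse {L : List V} {x y : V} :
    ContainsEdge L.reverse x y ↔ ContainsEdge L x y := by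
  have key : ∀ (a b : V) (M : List V), ([a, b] <:+: M.reverse) ↔ [b, a] <:+: M := by
    intro a b M
    rw [show [a, b] = [b, a].reverse from rfl, List.reverse_infix]
  rw [ContainsEdge, ContainsEdge, key, key]
  exact or_comm

lemma exists_rotation_of_cnext {C : List V} (hC : C ≠ []) {a b : V} (h : CNext C a b) :
    ∃ k, (C.rotate k).head? = some b ∧ (C.rotate k).getLast? = some a := by
  have hlen : 0 < C.length := List.length_pos_iff.mpr hC
  rw [cnext_iff_mod hC] at h
  obtain ⟨n, hn, h1, h2⟩ := h
  refine ⟨n + 1, ?_, ?_⟩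
  · rw [List.head?_eq_getElem?, List.getElem?_rotate (by simpa using hlen)]
    simpa using h2
  · rw [List.getLast?_eq_getElem?]
    simp only [List.length_rotate]
    rw [List.getElem?_rotate (by omega : C.length - 1 < C.length)]
    have e : (C.length - 1 + (n + 1)) % C.length = n := by
      have e2 : C.length - 1 + (n + 1) = C.length + n := by omega
      rw [e2, Nat.add_comm, Nat.add_mod_right, Nat.mod_eq_of_lt hn]
    rw [e]
    exact h1

lemma cycLen_eq (d : V → V → ℝ) (C : List V) (hC : C ≠ []) :
    cycLen d C = pathLen d C + d (C.getLast hC) (C.head hC) := by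
  rw [cycLen, closed_eq C hC, pathLen_append_singleton d _ C hC]

lemma cycLen_rotate_one (d : V → V → ℝ) (C : List V) :
    cycLen d (C.rotate 1) = cycLen d C := by
  rcases C with _ | ⟨a, t⟩
  · rfl
  rcases t with _ | ⟨b, t⟩
  · rw [List.rotate_singleton]
  rw [show (1 : ℕ) = 0 + 1 from rfl, List.rotate_cons_succ, List.rotate_zero]
  have h1 : cycLen d (a :: b :: t) = d a b + pathLen d (b :: (t ++ [a])) := by
    rw [cycLen, show (a :: b :: t) ++ (a :: b :: t).take 1 = a :: (b :: (t ++ [a])) by simp,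
      pathLen_cons]
  have h2 : cycLen d ((b :: t) ++ [a]) = pathLen d (b :: (t ++ [a])) + d a b := by
    have hne : (b :: t) ++ [a] ≠ [] := by simp
    rw [cycLen, show ((b :: t) ++ [a]) ++ ((b :: t) ++ [a]).take 1 = ((b :: t) ++ [a]) ++ [b]
        by simp,
      pathLen_append_singleton d b _ hne, List.getLast_concat]
    simp
  rw [h1, h2]
  ring

lemma cycLen_rotate (d : V → V → ℝ) (C : List V) (k : ℕ) :
    cycLen d (C.rotate k) = cycLen d C := by
  induction k with
  | zero => rw [List.rotate_zero]
  | succ m ih =>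
    rw [← ih, ← List.rotate_rotate, cycLen_rotate_one]

lemma nodup_index_unique {P : List V} (h : P.Nodup) {m n : ℕ} {a : V}
    (hm : P[m]? = some a) (hn : P[n]? = some a) : m = n := by
  obtain ⟨hm1, hm2⟩ := List.getElem?_eq_some_iff.mp hm
  obtain ⟨hn1, hn2⟩ := List.getElem?_eq_some_iff.mp hn
  exact (List.Nodup.getElem_inj_iff h).mp (hm2.trans hn2.symm)

end Helpers

/-- Every ordinary edge `g = {x, y}` has frequency at most
`i(i-1)/2 - i - 1`: it lies in none of the `i` optimal paths whose endpoints are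
cyclically consecutive on the OHC, nor in the optimal path whose endpoints are
the endpoints of `g`. -/
theorem stmt9 {V : Type*} [Fintype V] [DecidableEq V] (i : ℕ) (hi : 4 ≤ i)
    (hcard : Fintype.card V = i)
    (d : V → V → ℝ) (hdsymm : ∀ u v : V, d u v = d v u)
    (hdpos : ∀ u v : V, u ≠ v → 0 < d u v)
    (OP : V → V → List V)
    (hOP : ∀ u v : V, u ≠ v → IsHamPath (OP u v) u v)
    (hOPmin : ∀ u v : V, u ≠ v → ∀ Q : List V, IsHamPath Q u v →
      pathLen d (OP u v) ≤ pathLen d Q)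
    (hOPuniq : ∀ u v : V, u ≠ v → ∀ Q : List V, IsHamPath Q u v →
      pathLen d Q = pathLen d (OP u v) → Q = OP u v)
    (hOPsymm : ∀ u v : V, OP v u = (OP u v).reverse)
    (H : List V) (hH : IsHamCycle H)
    (hHmin : ∀ C : List V, IsHamCycle C → cycLen d H ≤ cycLen d C)
    (hHuniq : ∀ C : List V, IsHamCycle C → cycLen d C = cycLen d H →
      ∃ k : ℕ, C = H.rotate k ∨ C = H.reverse.rotate k) :
    ∀ x y : V, x ≠ y → ¬ CycAdj H x y →
      (∀ u v : V, u ≠ v → CycAdj H u v → ¬ ContainsEdge (OP u v) x y) ∧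
      ¬ ContainsEdge (OP x y) x y ∧
      freq OP s(x, y) ≤ i * (i - 1) / 2 - i - 1 := by
  intro x y hxy hnadj
  obtain ⟨hHnd, hHmem⟩ := hH
  have hHne : H ≠ [] := fun h => by rw [h] at hHmem; exact List.not_mem_nil (hHmem x)
  have hHuniverse : H.toFinset = Finset.univ := by
    ext z; simp [hHmem z]
  have hHlen : H.length = i := by
    rw [← List.toFinset_card_of_nodup hHnd, hHuniverse, Finset.card_univ, hcard]
  -- length of any Hamiltonian path is i
  have hlenHP : ∀ (P : List V) (u v : V), IsHamPath P u v → P.length = i := by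
    rintro P u v ⟨hnd, hmem, -, -⟩
    have huniv : P.toFinset = Finset.univ := by ext z; simp [hmem z]
    rw [← List.toFinset_card_of_nodup hnd, huniv, Finset.card_univ, hcard]
  -- Part 1
  have part1 : ∀ u v : V, u ≠ v → CycAdj H u v → ¬ ContainsEdge (OP u v) x y := by
    intro u v huv hadj hcont
    obtain ⟨hPnd, hPmem, hPhead, hPlast⟩ := hOP u v huv
    have hPne : OP u v ≠ [] := by
      intro h; rw [h] at hPhead; simp at hPhead
    have hPhead' : (OP u v).head hPne = u := by
      rw [List.head?_eq_head hPne] at hPhead; exact Option.some_inj.mp hPhead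
    have hPlast' : (OP u v).getLast hPne = v := by
      rw [List.getLast?_eq_getLast hPne] at hPlast; exact Option.some_inj.mp hPlast
    have hPcyc : IsHamCycle (OP u v) := ⟨hPnd, hPmem⟩
    -- construct a Hamiltonian path Q from u to v by cutting H at the edge uv
    obtain ⟨Q, hQ, hQlen⟩ : ∃ Q, IsHamPath Q u v ∧ pathLen d Q + d u v = cycLen d H := by
      rcases cycAdj_iff.mp hadj with h | h
      · -- CNext H u v : rotation R with head v, last u; use R.reverse
        obtain ⟨k, hk1, hk2⟩ := exists_rotation_of_cnext hHne h
        set R := H.rotate k with hR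
        have hRne : R ≠ [] := fun he => hHne (List.rotate_eq_nil_iff.mp he)
        refine ⟨R.reverse, ⟨?_, ?_, ?_, ?_⟩, ?_⟩
        · exact (List.nodup_reverse).mpr (List.nodup_rotate.mpr hHnd)
        · intro z; rw [List.mem_reverse, List.mem_rotate]; exact hHmem z
        · rw [List.head?_reverse]; exact hk2
        · rw [List.getLast?_reverse]; exact hk1
        · rw [pathLen_reverse d hdsymm]
          have hRhead : R.head hRne = v := by
            rw [List.head?_eq_head hRne] at hk1; exact Option.some_inj.mp hk1
          have hRlast : R.getLast hRne = u := by
            rw [List.getLast?_eq_getLast hRne] at hk2; exact Option.some_inj.mp hk2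
          have := cycLen_eq d R hRne
          rw [hRhead, hRlast] at this
          rw [← this, hR, cycLen_rotate]
      · -- CNext H v u : rotation R with head u, last v; use R itself
        obtain ⟨k, hk1, hk2⟩ := exists_rotation_of_cnext hHne h
        set R := H.rotate k with hR
        have hRne : R ≠ [] := fun he => hHne (List.rotate_eq_nil_iff.mp he)
        refine ⟨R, ⟨List.nodup_rotate.mpr hHnd, fun z => List.mem_rotate.mpr (hHmem z),
          hk1, hk2⟩, ?_⟩
        have hRhead : R.head hRne = u := by
          rw [List.head?_eq_head hRne] at hk1; exact Option.some_inj.mp hk1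
        have hRlast : R.getLast hRne = v := by
          rw [List.getLast?_eq_getLast hRne] at hk2; exact Option.some_inj.mp hk2
        have := cycLen_eq d R hRne
        rw [hRhead, hRlast, hdsymm v u] at this
        rw [← this, hR, cycLen_rotate]
    have h1 : pathLen d (OP u v) ≤ pathLen d Q := hOPmin u v huv Q hQ
    have h2 : cycLen d H ≤ cycLen d (OP u v) := hHmin _ hPcyc
    have h3 : cycLen d (OP u v) = pathLen d (OP u v) + d v u := by
      rw [cycLen_eq d _ hPne, hPlast', hPhead']
    have h4 : cycLen d (OP u v) = cycLen d H := by
      have : cycLen d (OP u v) ≤ cycLen d H := by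
        rw [h3, hdsymm v u, ← hQlen]
        linarith
      linarith
    obtain ⟨k, hk | hk⟩ := hHuniq (OP u v) hPcyc h4
    · have hca : CycAdj (H.rotate k) x y := hk ▸ cycAdj_of_containsEdge hcont
      exact hnadj ((cycAdj_rotate k).mp hca)
    · have hca : CycAdj (H.reverse.rotate k) x y := hk ▸ cycAdj_of_containsEdge hcont
      exact hnadj (cycAdj_reverse.mp ((cycAdj_rotate k).mp hca))
  -- Part 2
  have part2 : ¬ ContainsEdge (OP x y) x y := by
    intro hcont
    obtain ⟨hnd, hmem, hhead, hlast⟩ := hOP x y hxy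
    have hPlen : (OP x y).length = i := hlenHP _ _ _ (hOP x y hxy)
    have h0 : (OP x y)[0]? = some x := by rw [← List.head?_eq_getElem?]; exact hhead
    have hl : (OP x y)[(OP x y).length - 1]? = some y := by
      rw [← List.getLast?_eq_getElem?]; exact hlast
    rcases hcont with h | h
    · obtain ⟨n, h1, h2⟩ := pair_infix_iff.mp h
      have hn0 : n = 0 := nodup_index_unique hnd h1 h0
      subst hn0
      have : 1 = (OP x y).length - 1 := nodup_index_unique hnd h2 hl
      omega
    · obtain ⟨n, h1, h2⟩ := pair_infix_iff.mp h
      have : n + 1 = 0 := nodup_index_unique hnd h2 h0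
      omega
  refine ⟨part1, part2, ?_⟩
  -- Part 3 : counting
  classical
  set Qp : Sym2 V → Prop := fun p => ¬ p.IsDiag ∧
    ∃ u v : V, p = s(u, v) ∧ ∃ x' y' : V, s(x, y) = s(x', y') ∧ ContainsEdge (OP u v) x' y'
    with hQp
  have hfreq : freq OP s(x, y) = (Finset.univ.filter Qp).card := by
    rw [freq, Nat.card_eq_fintype_card, Fintype.card_subtype]
  have hHpos : 0 < H.length := List.length_pos_iff.mpr hHne
  -- the i cyclic edges of H
  set T1 : Finset (Sym2 V) := Finset.univ.image
    (fun k : Fin H.length => s(H.get k, H.get ⟨(k.val + 1) % H.length, Nat.mod_lt _ k.pos⟩))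
    with hT1
  set T : Finset (Sym2 V) := T1 ∪ {s(x, y)} with hT
  set A : Finset (Sym2 V) := Finset.univ.filter (fun p => ¬ p.IsDiag) with hA
  -- every element of T1 is a cyclic adjacency
  have hT1adj : ∀ p ∈ T1, ∃ a b : V, a ≠ b ∧ p = s(a, b) ∧ CycAdj H a b := by
    intro p hp
    rw [hT1, Finset.mem_image] at hp
    obtain ⟨k, -, hk⟩ := hp
    set k' : Fin H.length := ⟨(k.val + 1) % H.length, Nat.mod_lt _ k.pos⟩ with hk'
    have hkk' : k.val ≠ k'.val := by
      intro he
      rcases Nat.lt_or_ge (k.val + 1) H.length with hlt | hge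
      · rw [hk'] at he; simp only at he
        rw [Nat.mod_eq_of_lt hlt] at he; omega
      · have : k.val + 1 = H.length := by omega
        rw [hk'] at he; simp only at he
        rw [this, Nat.mod_self] at he
        omega
    have hne : H.get k ≠ H.get k' := by
      intro he
      exact hkk' ((List.Nodup.getElem_inj_iff hHnd).mp he)
    refine ⟨H.get k, H.get k', hne, hk.symm, ?_⟩
    rw [cycAdj_iff]
    left
    rw [cnext_iff_mod hHne]
    exact ⟨k.val, k.isLt, by simp [List.getElem?_eq_getElem], by simp [hk', List.getElem?_eq_getElem]⟩
  -- membership of s(a,b) in T1 implies cyclic adjacency of a and b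
  have hT1mem : ∀ a b : V, s(a, b) ∈ T1 → CycAdj H a b := by
    intro a b hab
    obtain ⟨c, e, hce, hpe, hadj⟩ := hT1adj _ hab
    rcases Sym2.eq_iff.mp hpe with ⟨rfl, rfl⟩ | ⟨rfl, rfl⟩
    · exact hadj
    · exact cycAdj_symm hadj
  -- S and T are disjoint
  have hdisj : Disjoint (Finset.univ.filter Qp) T := by
    rw [Finset.disjoint_left]
    intro p hp hpT
    rw [Finset.mem_filter] at hp
    obtain ⟨-, hdiag, u, v, rfl, x', y', hsxy, hcont⟩ := hp
    have huv : u ≠ v := fun h => hdiag (by rw [h]; exact Sym2.mk_isDiag_iff.mpr rfl)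
    have hcontxy : ContainsEdge (OP u v) x y := by
      rcases Sym2.eq_iff.mp hsxy with ⟨rfl, rfl⟩ | ⟨rfl, rfl⟩
      · exact hcont
      · exact hcont.symm
    rw [hT, Finset.mem_union, Finset.mem_singleton] at hpT
    rcases hpT with hpT | hpT
    · exact part1 u v huv (hT1mem u v hpT) hcontxy
    · rcases Sym2.eq_iff.mp hpT with ⟨rfl, rfl⟩ | ⟨rfl, rfl⟩
      · exact part2 hcontxy
      · rw [hOPsymm, containsEdge_reverse] at hcontxy
        exact part2 hcontxy
  -- S ⊆ A and T ⊆ A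
  have hSA : Finset.univ.filter Qp ⊆ A := by
    intro p hp
    rw [Finset.mem_filter] at hp ⊢
    exact ⟨Finset.mem_univ p, hp.2.1⟩
  have hTA : T ⊆ A := by
    intro p hp
    rw [hT, Finset.mem_union, Finset.mem_singleton] at hp
    rw [hA, Finset.mem_filter]
    refine ⟨Finset.mem_univ p, ?_⟩
    rcases hp with hp | hp
    · obtain ⟨a, b, hab, rfl, -⟩ := hT1adj _ hp
      rw [Sym2.mk_isDiag_iff]
      exact hab
    · rw [hp, Sym2.mk_isDiag_iff]
      exact hxy
  -- T has exactly i + 1 elements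
  have hinj : Function.Injective
      (fun k : Fin H.length => s(H.get k, H.get ⟨(k.val + 1) % H.length, Nat.mod_lt _ k.pos⟩)) := by
    intro k j he
    simp only at he
    have h3L : 3 ≤ H.length := by omega
    rcases Sym2.eq_iff.mp he with ⟨he1, he2⟩ | ⟨he1, he2⟩
    · exact Fin.ext ((List.Nodup.getElem_inj_iff hHnd).mp he1)
    · exfalso
      have e1 : k.val = (j.val + 1) % H.length := (List.Nodup.getElem_inj_iff hHnd).mp he1
      have e2 : (k.val + 1) % H.length = j.val := (List.Nodup.getElem_inj_iff hHnd).mp he2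
      have hj : j.val < H.length := j.isLt
      have hk2 : (j.val + 2) % H.length = j.val := by
        calc (j.val + 2) % H.length = ((j.val + 1) % H.length + 1) % H.length := by
              rw [Nat.mod_add_mod]
          _ = (k.val + 1) % H.length := by rw [← e1]
          _ = j.val := e2
      rcases Nat.lt_or_ge (j.val + 2) H.length with hlt | hge
      · rw [Nat.mod_eq_of_lt hlt] at hk2; omega
      · have : (j.val + 2) % H.length = j.val + 2 - H.length := by
          rw [Nat.mod_eq_sub_mod hge, Nat.mod_eq_of_lt (by omega)]
        rw [this] at hk2; omega
  have hT1card : T1.card = i := by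
    rw [hT1, Finset.card_image_of_injective _ hinj, Finset.card_univ, Fintype.card_fin, hHlen]
  have hxyT1 : s(x, y) ∉ T1 := fun h => hnadj (hT1mem x y h)
  have hTcard : T.card = i + 1 := by
    rw [hT, Finset.card_union_of_disjoint (by simpa using hxyT1), hT1card,
      Finset.card_singleton]
  -- A has exactly i(i-1)/2 elements
  have hAcard : A.card = i * (i - 1) / 2 := by
    rw [hA, ← Fintype.card_subtype, Sym2.card_subtype_not_diag, hcard, Nat.choose_two_right]
  -- conclusion
  have hle : (Finset.univ.filter Qp).card + T.card ≤ A.card := by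
    rw [← Finset.card_union_of_disjoint hdisj]
    exact Finset.card_le_card (Finset.union_subset hSA hTA)
  rw [hfreq]
  rw [hTcard, hAcard] at hle
  set M := i * (i - 1) / 2
  omega
end

section
/- The number of edges e of K_i whose frequency satisfies f(e) > i(i−1)/4 is at most ⌊3i/2⌋. -/
open Finset

section Aux

set_option linter.unusedSectionVars false

variable {V : Type*} [DecidableEq V]

instance {P : List V} {x y : V} : Decidable (ContainsEdge P x y) := by
  unfold ContainsEdge; infer_instance

lemma option_toFinset_card_le (o : Option V) : o.toFinset.card ≤ 1 := by
  cases o <;> simp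

lemma split_unique {P s₁ t₁ s₂ t₂ : List V} {w : V} (h : P.Nodup)
    (h1 : P = s₁ ++ w :: t₁) (h2 : P = s₂ ++ w :: t₂) : s₁ = s₂ ∧ t₁ = t₂ := by
  subst h1
  have hw1 : w ∉ s₁ := by
    have h' := h; rw [List.nodup_append] at h'
    exact fun hm => h'.2.2 w hm w List.mem_cons_self rfl
  have hw2 : w ∉ s₂ := by
    rw [h2, List.nodup_append] at h
    exact fun hm => h.2.2 w hm w List.mem_cons_self rfl
  have hlen : s₁.length = s₂.length := by
    have e1 : List.idxOf w (s₁ ++ w :: t₁) = s₁.length := by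
      rw [List.idxOf_append_of_notMem hw1]; simp
    have e2 : List.idxOf w (s₂ ++ w :: t₂) = s₂.length := by
      rw [List.idxOf_append_of_notMem hw2]; simp
    rw [← e1, h2, e2]
  obtain ⟨hs, ht⟩ := List.append_inj h2 hlen
  exact ⟨hs, List.tail_eq_of_cons_eq ht⟩

lemma containsEdge_cases {P : List V} {w y : V} (hnd : P.Nodup) {s t : List V}
    (hP : P = s ++ w :: t) (h : ContainsEdge P w y) :
    t.head? = some y ∨ s.getLast? = some y := by
  rcases h with ⟨a, b, hab⟩ | ⟨a, b, hab⟩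
  · have h2 : P = a ++ w :: (y :: b) := by rw [← hab]; simp
    obtain ⟨-, ht⟩ := split_unique hnd hP h2
    left; rw [ht]; rfl
  · have h2 : P = (a ++ [y]) ++ w :: b := by rw [← hab]; simp
    obtain ⟨hs, -⟩ := split_unique hnd hP h2
    right; rw [hs, List.getLast?_concat]

lemma containsEdge_mem {P : List V} {w y : V} (h : ContainsEdge P w y) : w ∈ P := by
  rcases h with h | h
  · exact h.sublist.mem List.mem_cons_self
  · exact h.sublist.mem (by simp)

lemma containsEdge_reverse_s11 {P : List V} {w y : V} :
    ContainsEdge P.reverse w y ↔ ContainsEdge P w y := by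
  constructor <;> rintro (h | h)
  · right; simpa using (List.reverse_infix.mpr (by simpa using h.reverse))
  · left; simpa using (List.reverse_infix.mpr (by simpa using h.reverse))
  · right; simpa using h.reverse
  · left; simpa using h.reverse

lemma containsEdge_symm {P : List V} {w y : V} :
    ContainsEdge P w y ↔ ContainsEdge P y w := Or.comm

lemma neighbors_card_le_two [Fintype V] {P : List V} (hnd : P.Nodup) (w : V) :
    (univ.filter fun y => ContainsEdge P w y).card ≤ 2 := by
  by_cases hw : w ∈ P
  · obtain ⟨s, t, hP⟩ := List.append_of_mem hw
    have hsub : (univ.filter fun y => ContainsEdge P w y) ⊆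
        t.head?.toFinset ∪ s.getLast?.toFinset := by
      intro y hy
      rw [mem_filter] at hy
      rcases containsEdge_cases hnd hP hy.2 with h | h <;>
        simp [Finset.mem_union, h]
    calc (univ.filter fun y => ContainsEdge P w y).card
        ≤ (t.head?.toFinset ∪ s.getLast?.toFinset).card := Finset.card_le_card hsub
      _ ≤ t.head?.toFinset.card + s.getLast?.toFinset.card := Finset.card_union_le _ _
      _ ≤ 2 := by
          have h1 := option_toFinset_card_le t.head?
          have h2 := option_toFinset_card_le s.getLast?
          omega
  · have : (univ.filter fun y => ContainsEdge P w y) = ∅ := by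
      ext y; simp only [mem_filter, mem_univ, true_and, Finset.notMem_empty, iff_false]
      exact fun h => hw (containsEdge_mem h)
    simp [this]

lemma neighbors_card_le_one_head [Fintype V] {P : List V} (hnd : P.Nodup) {w : V}
    (hw : P.head? = some w) :
    (univ.filter fun y => ContainsEdge P w y).card ≤ 1 := by
  obtain ⟨t, rfl⟩ : ∃ t, P = w :: t := by
    cases P with
    | nil => simp at hw
    | cons a l => exact ⟨l, by simpa using (congrArg (fun o => o.getD a :: l) hw.symm).symm⟩
  have hsub : (univ.filter fun y => ContainsEdge (w :: t) w y) ⊆ t.head?.toFinset := by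
    intro y hy
    rw [mem_filter] at hy
    rcases containsEdge_cases hnd (show w :: t = [] ++ w :: t by simp) hy.2 with h | h
    · simpa using h
    · simp at h
  exact le_trans (Finset.card_le_card hsub) (option_toFinset_card_le _)

lemma neighbors_card_le_one_last [Fintype V] {P : List V} (hnd : P.Nodup) {w : V}
    (hw : P.getLast? = some w) :
    (univ.filter fun y => ContainsEdge P w y).card ≤ 1 := by
  have := neighbors_card_le_one_head (P := P.reverse) (by simpa using hnd) (w := w)
    (by simpa using hw)
  simpa [containsEdge_reverse_s11] using this

lemma edge_cond_iff (Q : List V) (w x : V) :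
    (∃ x' y', s(w, x) = s(x', y') ∧ ContainsEdge Q x' y') ↔ ContainsEdge Q w x := by
  constructor
  · rintro ⟨a, b, he, h⟩
    rw [Sym2.eq_iff] at he
    rcases he with ⟨rfl, rfl⟩ | ⟨rfl, rfl⟩
    · exact h
    · exact containsEdge_symm.mpr h
  · exact fun h => ⟨w, x, rfl, h⟩

lemma freq_eq [Fintype V] (OP : V → V → List V) (w x : V) :
    freq OP s(w, x) = ((univ.filter fun p : Sym2 V => ¬ p.IsDiag).filter
      fun p => ∃ u v, p = s(u, v) ∧ ContainsEdge (OP u v) w x).card := by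
  rw [freq, Nat.card_eq_fintype_card, Fintype.card_subtype, Finset.filter_filter]
  congr 1
  apply Finset.filter_congr
  intro p _
  constructor
  · rintro ⟨hd, u, v, rfl, hc⟩
    exact ⟨hd, u, v, rfl, (edge_cond_iff _ _ _).mp hc⟩
  · rintro ⟨hd, u, v, rfl, hc⟩
    exact ⟨hd, u, v, rfl, (edge_cond_iff _ _ _).mpr hc⟩

lemma sum_bound [Fintype V] {i : ℕ} (hi : 4 ≤ i) (hcard : Fintype.card V = i)
    (OP : V → V → List V)
    (hOP : ∀ u v : V, u ≠ v → IsHamPath (OP u v) u v)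
    (hOPsymm : ∀ u v : V, OP v u = (OP u v).reverse) (w : V) :
    ∑ x ∈ univ.erase w, freq OP s(w, x) ≤ (i - 1) * (i - 1) := by
  set P2 : Finset (Sym2 V) := univ.filter fun p : Sym2 V => ¬ p.IsDiag with hP2
  -- rewrite as double sum
  have hdouble : ∑ x ∈ univ.erase w, freq OP s(w, x)
      = ∑ p ∈ P2, ((univ.erase w).filter
          fun x => ∃ u v, p = s(u, v) ∧ ContainsEdge (OP u v) w x).card := by
    simp only [freq_eq OP w, Finset.card_filter]
    rw [Finset.sum_comm]
  rw [hdouble]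
  -- per-pair bounds
  have hkey : ∀ p ∈ P2, ∀ b : ℕ, (w ∈ p → b = 1) → (w ∉ p → b = 2) →
      ((univ.erase w).filter
          fun x => ∃ u v, p = s(u, v) ∧ ContainsEdge (OP u v) w x).card ≤ b := by
    intro p hp b h1 h2
    induction p using Sym2.ind with
    | _ u v =>
      have hne : u ≠ v := by
        simp only [hP2, mem_filter, Sym2.mk_isDiag_iff] at hp
        exact hp.2
      obtain ⟨hnd, -, hhead, hlast⟩ := hOP u v hne
      have hsub : ((univ.erase w).filter
            fun x => ∃ u' v', s(u, v) = s(u', v') ∧ ContainsEdge (OP u' v') w x)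
          ⊆ univ.filter fun x => ContainsEdge (OP u v) w x := by
        intro x hx
        rw [mem_filter] at hx ⊢
        obtain ⟨-, u', v', he, hc⟩ := hx
        rw [Sym2.eq_iff] at he
        refine ⟨mem_univ _, ?_⟩
        rcases he with ⟨rfl, rfl⟩ | ⟨rfl, rfl⟩
        · exact hc
        · rw [hOPsymm, containsEdge_reverse_s11] at hc; exact hc
      refine le_trans (Finset.card_le_card hsub) ?_
      by_cases hw : w ∈ s(u, v)
      · rw [h1 hw]
        rw [Sym2.mem_iff] at hw
        rcases hw with rfl | rfl
        · exact neighbors_card_le_one_head hnd hhead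
        · exact neighbors_card_le_one_last hnd hlast
      · rw [h2 hw]
        exact neighbors_card_le_two hnd w
  -- split P2 by membership of w
  have hsplit := Finset.sum_filter_add_sum_filter_not P2 (fun p => w ∈ p)
    (fun p => ((univ.erase w).filter
        fun x => ∃ u v, p = s(u, v) ∧ ContainsEdge (OP u v) w x).card)
  rw [← hsplit]
  have hb1 : ∑ p ∈ P2.filter (fun p => w ∈ p), ((univ.erase w).filter
      fun x => ∃ u v, p = s(u, v) ∧ ContainsEdge (OP u v) w x).card
      ≤ (P2.filter (fun p => w ∈ p)).card * 1 := by
    rw [Finset.card_eq_sum_ones, Finset.sum_mul]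
    refine Finset.sum_le_sum fun p hp => ?_
    rw [mem_filter] at hp
    simpa using hkey p hp.1 1 (fun _ => rfl) (fun h => absurd hp.2 h)
  have hb2 : ∑ p ∈ P2.filter (fun p => ¬ w ∈ p), ((univ.erase w).filter
      fun x => ∃ u v, p = s(u, v) ∧ ContainsEdge (OP u v) w x).card
      ≤ (P2.filter (fun p => ¬ w ∈ p)).card * 2 := by
    rw [Finset.card_eq_sum_ones, Finset.sum_mul]
    refine Finset.sum_le_sum fun p hp => ?_
    rw [mem_filter] at hp
    simpa using hkey p hp.1 2 (fun h => absurd h hp.2) (fun _ => rfl)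
  -- cardinalities
  have hPw : (P2.filter (fun p => w ∈ p)).card = i - 1 := by
    have himg : P2.filter (fun p => w ∈ p) = (univ.erase w).image fun x => s(w, x) := by
      ext p
      simp only [mem_filter, Finset.mem_image, Finset.mem_erase, mem_univ, true_and, hP2]
      constructor
      · rintro ⟨hd, hm⟩
        induction p using Sym2.ind with
        | _ u v =>
          rw [Sym2.mk_isDiag_iff] at hd
          rw [Sym2.mem_iff] at hm
          rcases hm with rfl | rfl
          · exact ⟨v, ⟨fun h => hd h.symm, trivial⟩, rfl⟩
          · exact ⟨u, ⟨hd, trivial⟩, Sym2.eq_swap⟩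
      · rintro ⟨x, hx, rfl⟩
        refine ⟨?_, by simp⟩
        rw [Sym2.mk_isDiag_iff]
        exact fun h => hx.1 h.symm
    rw [himg, Finset.card_image_of_injOn, Finset.card_erase_of_mem (mem_univ w),
      Finset.card_univ, hcard]
    intro x _ y _ hxy
    exact (Sym2.congr_right).mp hxy
  have hP2card : P2.card = i.choose 2 := by
    rw [hP2, ← Fintype.card_subtype, Sym2.card_subtype_not_diag, hcard]
  have hPnw : (P2.filter (fun p => ¬ w ∈ p)).card = i.choose 2 - (i - 1) := by
    have := Finset.card_filter_add_card_filter_not (s := P2)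
      (p := fun p => w ∈ p)
    omega
  have hch : i.choose 2 * 2 = i * (i - 1) := by
    rw [Nat.choose_two_right]
    exact Nat.div_mul_cancel (Nat.even_mul_pred_self i).two_dvd
  have hch2 : 2 * (i - 1) ≤ i * (i - 1) := by
    exact Nat.mul_le_mul_right _ (by omega)
  calc _ ≤ (P2.filter (fun p => w ∈ p)).card * 1
        + (P2.filter (fun p => ¬ w ∈ p)).card * 2 := Nat.add_le_add hb1 hb2
    _ ≤ (i - 1) * (i - 1) := by
        obtain ⟨j, rfl⟩ : ∃ j, i = j + 1 := ⟨i - 1, by omega⟩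
        have he : (j + 1) * j = j * j + j := by ring
        rw [hPw, hPnw]
        simp only [Nat.add_sub_cancel] at *
        omega

end Aux

/-- At most `⌊3i/2⌋` edges of `K_i` have frequency strictly
greater than `i(i-1)/4`. -/
theorem stmt11 {V : Type*} [Fintype V] [DecidableEq V] (i : ℕ) (hi : 4 ≤ i)
    (hcard : Fintype.card V = i)
    (d : V → V → ℝ) (hdsymm : ∀ u v : V, d u v = d v u)
    (hdpos : ∀ u v : V, u ≠ v → 0 < d u v)
    (OP : V → V → List V)
    (hOP : ∀ u v : V, u ≠ v → IsHamPath (OP u v) u v)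
    (hOPmin : ∀ u v : V, u ≠ v → ∀ Q : List V, IsHamPath Q u v →
      pathLen d (OP u v) ≤ pathLen d Q)
    (hOPuniq : ∀ u v : V, u ≠ v → ∀ Q : List V, IsHamPath Q u v →
      pathLen d Q = pathLen d (OP u v) → Q = OP u v)
    (hOPsymm : ∀ u v : V, OP v u = (OP u v).reverse) :
    Nat.card {e : Sym2 V // ¬ e.IsDiag ∧
      (i : ℚ) * ((i : ℚ) - 1) / 4 < (freq OP e : ℚ)} ≤ 3 * i / 2 := by
  classical
  set thresh : ℚ := (i : ℚ) * ((i : ℚ) - 1) / 4 with hthresh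
  have hNat : Nat.card {e : Sym2 V // ¬ e.IsDiag ∧ thresh < (freq OP e : ℚ)}
      = (univ.filter fun e : Sym2 V => ¬ e.IsDiag ∧ thresh < (freq OP e : ℚ)).card := by
    rw [Nat.card_eq_fintype_card, Fintype.card_subtype]
  rw [hNat]
  set S := univ.filter fun e : Sym2 V => ¬ e.IsDiag ∧ thresh < (freq OP e : ℚ) with hS
  rw [Nat.le_div_iff_mul_le two_pos]
  set N : V → Finset V :=
    fun w => univ.filter fun x => x ≠ w ∧ thresh < (freq OP s(w, x) : ℚ) with hN
  -- each vertex is in at most 3 heavy edges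
  have hN3 : ∀ w, (N w).card ≤ 3 := by
    intro w
    by_contra hlt
    push_neg at hlt
    have h4 : 4 ≤ (N w).card := hlt
    have hsub : N w ⊆ univ.erase w := by
      intro x hx
      rw [hN, mem_filter] at hx
      exact Finset.mem_erase.mpr ⟨hx.2.1, mem_univ _⟩
    have hub : ∑ x ∈ N w, freq OP s(w, x) ≤ (i - 1) * (i - 1) :=
      le_trans (Finset.sum_le_sum_of_subset hsub) (sum_bound hi hcard OP hOP hOPsymm w)
    have hlb : ((N w).card : ℚ) * thresh < ((∑ x ∈ N w, freq OP s(w, x) : ℕ) : ℚ) := by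
      push_cast
      calc ((N w).card : ℚ) * thresh = ∑ _x ∈ N w, thresh := by
            rw [Finset.sum_const, nsmul_eq_mul]
        _ < ∑ x ∈ N w, (freq OP s(w, x) : ℚ) := by
            refine Finset.sum_lt_sum_of_nonempty (Finset.card_pos.mp (by omega)) ?_
            intro x hx
            rw [hN, mem_filter] at hx
            exact hx.2.2
    have hic : (4 : ℚ) ≤ ((N w).card : ℚ) := by exact_mod_cast h4
    have hiq : (4 : ℚ) ≤ (i : ℚ) := by exact_mod_cast hi
    have hcast : (((i - 1) * (i - 1) : ℕ) : ℚ) = ((i : ℚ) - 1) * ((i : ℚ) - 1) := by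
      push_cast [Nat.cast_sub (by omega : 1 ≤ i)]
      ring
    have hub' : ((∑ x ∈ N w, freq OP s(w, x) : ℕ) : ℚ) ≤ ((i : ℚ) - 1) * ((i : ℚ) - 1) := by
      rw [← hcast]; exact_mod_cast hub
    have hth : (0 : ℚ) ≤ thresh := by
      rw [hthresh]; nlinarith [hiq]
    nlinarith [mul_le_mul_of_nonneg_right hic hth]
  -- double counting pairs (w, x)
  set D : Finset (V × V) :=
    univ.filter (fun q => q.2 ≠ q.1 ∧ thresh < (freq OP s(q.1, q.2) : ℚ)) with hD
  have hDsum : D.card = ∑ w : V, (N w).card := by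
    rw [hD, Finset.card_filter, Fintype.sum_prod_type]
    exact Finset.sum_congr rfl fun w _ => (Finset.card_filter _ _).symm
  have hDS : ∀ q ∈ D, s(q.1, q.2) ∈ S := by
    intro q hq
    rw [hD, mem_filter] at hq
    rw [hS, mem_filter]
    exact ⟨mem_univ _, by rw [Sym2.mk_isDiag_iff]; exact fun h => hq.2.1 h.symm, hq.2.2⟩
  have hfib : D.card = ∑ e ∈ S, (D.filter fun q => s(q.1, q.2) = e).card :=
    Finset.card_eq_sum_card_fiberwise hDS
  have htwo : ∀ e ∈ S, 2 ≤ (D.filter fun q => s(q.1, q.2) = e).card := by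
    intro e he
    induction e using Sym2.ind with
    | _ a b =>
      rw [hS, mem_filter, Sym2.mk_isDiag_iff] at he
      have hne : a ≠ b := he.2.1
      have hsub : ({(a, b), (b, a)} : Finset (V × V)) ⊆
          D.filter fun q => s(q.1, q.2) = s(a, b) := by
        intro q hq
        simp only [Finset.mem_insert, Finset.mem_singleton] at hq
        rw [mem_filter, hD, mem_filter]
        rcases hq with rfl | rfl
        · exact ⟨⟨mem_univ _, Ne.symm hne, he.2.2⟩, rfl⟩
        · refine ⟨⟨mem_univ _, hne, ?_⟩, Sym2.eq_swap⟩
          rw [show s(b, a) = s(a, b) from Sym2.eq_swap]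
          exact he.2.2
      have hcard2 : ({(a, b), (b, a)} : Finset (V × V)).card = 2 := by
        rw [Finset.card_insert_of_notMem (by simp [Prod.ext_iff, hne]),
          Finset.card_singleton]
      rw [← hcard2]
      exact Finset.card_le_card hsub
  calc S.card * 2 = ∑ _e ∈ S, 2 := by rw [Finset.sum_const, smul_eq_mul]
    _ ≤ ∑ e ∈ S, (D.filter fun q => s(q.1, q.2) = e).card := Finset.sum_le_sum htwo
    _ = D.card := hfib.symm
    _ = ∑ w : V, (N w).card := hDsum
    _ ≤ ∑ _w : V, 3 := Finset.sum_le_sum fun w _ => hN3 w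
    _ = 3 * i := by rw [Finset.sum_const, smul_eq_mul, Finset.card_univ, hcard, mul_comm]
end
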